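/- arXiv:2305.01041 — 2 statements merged into one kernel-verified Lean document; each statement's English description precedes it below -/
import Mathlib

section
/- In the free symmetric monoidal category on the theory of commutative monoids (with generating morphisms a multiplication μ : 2 → 1 and unit η : 0 → 1 satisfying commutativity, unitality, and associativity), every morphism f : A → B satisfies the naturality equation (η ⊗ ... ⊗ η) ; f = η ⊗ ... ⊗ η, i.e., precomposing f with A copies of the unit yields B copies of the unit. -/
/-- `Σ`-terms over the theory `CMon` of commutative monoids on one generating object:
generated by identities, symmetries, the multiplication `μ : 2 → 1` and the unit
`η : 0 → 1` under sequential composition and tensor. -/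
inductive CMonTerm : ℕ → ℕ → Type where
  | id (n : ℕ) : CMonTerm n n
  | comp {a b c : ℕ} : CMonTerm a b → CMonTerm b c → CMonTerm a c
  | tensor {a b c d : ℕ} : CMonTerm a b → CMonTerm c d → CMonTerm (a + c) (b + d)
  | swap (m n : ℕ) : CMonTerm (m + n) (n + m)
  | mu : CMonTerm 2 1
  | eta : CMonTerm 0 1

/-- Transport a term along equalities of its boundaries. -/
def CMonTerm.castT {a a' b b' : ℕ} (ha : a = a') (hb : b = b') (x : CMonTerm a b) :
    CMonTerm a' b' := by subst ha hb; exact x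

/-- Equality of `CMon`-terms: the congruence generated by the axioms of strict
symmetric monoidal categories together with the commutative-monoid equations for
`μ` and `η`. -/
inductive CMonEq : ∀ {a b : ℕ}, CMonTerm a b → CMonTerm a b → Prop where
  | refl {a b} (x : CMonTerm a b) : CMonEq x x
  | symm {a b} {x y : CMonTerm a b} : CMonEq x y → CMonEq y x
  | trans {a b} {x y z : CMonTerm a b} : CMonEq x y → CMonEq y z → CMonEq x z
  | comp_congr {a b c} {x x' : CMonTerm a b} {y y' : CMonTerm b c} :
      CMonEq x x' → CMonEq y y' → CMonEq (x.comp y) (x'.comp y')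
  | tensor_congr {a b c d} {x x' : CMonTerm a b} {y y' : CMonTerm c d} :
      CMonEq x x' → CMonEq y y' → CMonEq (x.tensor y) (x'.tensor y')
  | id_comp {a b} (x : CMonTerm a b) : CMonEq ((CMonTerm.id a).comp x) x
  | comp_id {a b} (x : CMonTerm a b) : CMonEq (x.comp (CMonTerm.id b)) x
  | comp_assoc {a b c d} (x : CMonTerm a b) (y : CMonTerm b c) (z : CMonTerm c d) :
      CMonEq ((x.comp y).comp z) (x.comp (y.comp z))
  | interchange {a b c a' b' c'} (f : CMonTerm a b) (g : CMonTerm b c)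
      (f' : CMonTerm a' b') (g' : CMonTerm b' c') :
      CMonEq ((f.tensor f').comp (g.tensor g')) ((f.comp g).tensor (f'.comp g'))
  | tensor_id (a b : ℕ) :
      CMonEq ((CMonTerm.id a).tensor (CMonTerm.id b)) (CMonTerm.id (a + b))
  | tensor_assoc {a b c d e f} (x : CMonTerm a b) (y : CMonTerm c d) (z : CMonTerm e f) :
      CMonEq ((x.tensor y).tensor z)
        ((x.tensor (y.tensor z)).castT (Nat.add_assoc a c e).symm (Nat.add_assoc b d f).symm)
  | tensor_unit_right {a b} (x : CMonTerm a b) : CMonEq (x.tensor (CMonTerm.id 0)) x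
  | tensor_unit_left {a b} (x : CMonTerm a b) :
      CMonEq ((CMonTerm.id 0).tensor x) (x.castT (Nat.zero_add a).symm (Nat.zero_add b).symm)
  | swap_naturality {a b c d} (f : CMonTerm a b) (g : CMonTerm c d) :
      CMonEq ((f.tensor g).comp (CMonTerm.swap b d)) ((CMonTerm.swap a c).comp (g.tensor f))
  | swap_swap (m n : ℕ) :
      CMonEq ((CMonTerm.swap m n).comp (CMonTerm.swap n m)) (CMonTerm.id (m + n))
  | swap_unit (m : ℕ) :
      CMonEq (CMonTerm.swap m 0) ((CMonTerm.id m).castT rfl (Nat.zero_add m).symm)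
  | swap_hexagon (a b c : ℕ) :
      CMonEq (CMonTerm.swap (a + b) c)
        (((((CMonTerm.id a).tensor (CMonTerm.swap b c)).castT rfl
              (Nat.add_assoc a c b).symm).comp
            ((CMonTerm.swap a c).tensor (CMonTerm.id b))).castT
          (Nat.add_assoc a b c).symm (Nat.add_assoc c a b))
  | mu_comm : CMonEq ((CMonTerm.swap 1 1).comp CMonTerm.mu) CMonTerm.mu
  | mu_unit : CMonEq ((CMonTerm.eta.tensor (CMonTerm.id 1)).comp CMonTerm.mu) (CMonTerm.id 1)
  | mu_assoc : CMonEq ((CMonTerm.mu.tensor (CMonTerm.id 1)).comp CMonTerm.mu)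
      (((CMonTerm.id 1).tensor CMonTerm.mu).comp CMonTerm.mu)

/-- The `A`-fold tensor power `η ⊗ ⋯ ⊗ η : 0 → A` of the unit. -/
def etaN : (n : ℕ) → CMonTerm 0 n
  | 0 => CMonTerm.id 0
  | n + 1 => (etaN n).tensor CMonTerm.eta

instance : Trans (@CMonEq a b) (@CMonEq a b) (@CMonEq a b) := ⟨CMonEq.trans⟩

lemma castT_triv {a b : ℕ} (ha : a = a) (hb : b = b) (x : CMonTerm a b) :
    x.castT ha hb = x := rfl

/-- `etaN (a + c)` equals `etaN a ⊗ etaN c` (note `0 + 0` is defeq to `0`). -/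
lemma etaN_add (a c : ℕ) : CMonEq (etaN (a + c)) ((etaN a).tensor (etaN c)) := by
  induction c with
  | zero => exact (CMonEq.tensor_unit_right (etaN a)).symm
  | succ c ih =>
    have h1 : CMonEq (etaN (a + (c+1))) (((etaN a).tensor (etaN c)).tensor CMonTerm.eta) :=
      CMonEq.tensor_congr ih (CMonEq.refl _)
    have h2 := CMonEq.tensor_assoc (etaN a) (etaN c) CMonTerm.eta
    rw [castT_triv] at h2
    exact h1.trans h2

lemma swap_zero_zero : CMonEq (CMonTerm.swap 0 0) (CMonTerm.id 0) := by
  have := CMonEq.swap_unit 0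
  rwa [castT_triv] at this

lemma swap_one_zero : CMonEq (CMonTerm.swap 1 0) (CMonTerm.id 1) := by
  have := CMonEq.swap_unit 1
  rwa [castT_triv] at this

lemma mu_unit' : CMonEq (((CMonTerm.id 1).tensor CMonTerm.eta).comp CMonTerm.mu)
    (CMonTerm.id 1) := by
  have h1 : CMonEq (((CMonTerm.id 1).tensor CMonTerm.eta).comp CMonTerm.mu)
      (((CMonTerm.id 1).tensor CMonTerm.eta).comp
        ((CMonTerm.swap 1 1).comp CMonTerm.mu)) :=
    CMonEq.comp_congr (CMonEq.refl _) CMonEq.mu_comm.symm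
  have h2 := (CMonEq.comp_assoc ((CMonTerm.id 1).tensor CMonTerm.eta)
      (CMonTerm.swap 1 1) CMonTerm.mu).symm
  have h3 : CMonEq ((((CMonTerm.id 1).tensor CMonTerm.eta).comp
        (CMonTerm.swap 1 1)).comp CMonTerm.mu)
      (((CMonTerm.swap 1 0).comp (CMonTerm.eta.tensor (CMonTerm.id 1))).comp
        CMonTerm.mu) :=
    CMonEq.comp_congr (CMonEq.swap_naturality _ _) (CMonEq.refl _)
  have h4 : CMonEq (((CMonTerm.swap 1 0).comp
        (CMonTerm.eta.tensor (CMonTerm.id 1))).comp CMonTerm.mu)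
      ((CMonTerm.eta.tensor (CMonTerm.id 1)).comp CMonTerm.mu) :=
    CMonEq.comp_congr ((CMonEq.comp_congr swap_one_zero (CMonEq.refl _)).trans
      (CMonEq.id_comp _)) (CMonEq.refl _)
  exact (((h1.trans h2).trans h3).trans h4).trans CMonEq.mu_unit

/-- Naturality of the unit in the free symmetric monoidal category on `CMon`:
for every morphism `f : A → B`, precomposing `f` with `A` copies of `η` is equal
(modulo the SMC and `CMon` equations) to `B` copies of `η`. -/
theorem eta_naturality (A B : ℕ) (f : CMonTerm A B) :
    CMonEq ((etaN A).comp f) (etaN B) := by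
  induction f with
  | id n => exact CMonEq.comp_id _
  | comp x y ihx ihy =>
    exact ((CMonEq.comp_assoc _ _ _).symm.trans
      (CMonEq.comp_congr ihx (CMonEq.refl _))).trans ihy
  | @tensor a b c d x y ihx ihy =>
    have h1 : CMonEq ((etaN (a + c)).comp (x.tensor y))
        (((etaN a).tensor (etaN c)).comp (x.tensor y)) :=
      CMonEq.comp_congr (etaN_add a c) (CMonEq.refl _)
    have h2 := CMonEq.interchange (etaN a) x (etaN c) y
    have h3 : CMonEq (((etaN a).comp x).tensor ((etaN c).comp y))
        ((etaN b).tensor (etaN d)) := CMonEq.tensor_congr ihx ihy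
    exact ((h1.trans h2).trans h3).trans (etaN_add b d).symm
  | swap m n =>
    have h1 : CMonEq ((etaN (m + n)).comp (CMonTerm.swap m n))
        (((etaN m).tensor (etaN n)).comp (CMonTerm.swap m n)) :=
      CMonEq.comp_congr (etaN_add m n) (CMonEq.refl _)
    have h2 := CMonEq.swap_naturality (etaN m) (etaN n)
    have h3 : CMonEq ((CMonTerm.swap 0 0).comp ((etaN n).tensor (etaN m)))
        ((etaN n).tensor (etaN m)) :=
      (CMonEq.comp_congr swap_zero_zero (CMonEq.refl _)).trans (CMonEq.id_comp _)
    exact ((h1.trans h2).trans h3).trans (etaN_add n m).symm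
  | mu =>
    -- etaN 2 = (id 0 ⊗ eta) ⊗ eta
    have e1 : CMonEq (etaN 1) CMonTerm.eta := by
      have := CMonEq.tensor_unit_left CMonTerm.eta
      rwa [castT_triv] at this
    have h1 : CMonEq ((etaN 2).comp CMonTerm.mu)
        ((CMonTerm.eta.tensor CMonTerm.eta).comp CMonTerm.mu) :=
      CMonEq.comp_congr (CMonEq.tensor_congr e1 (CMonEq.refl _)) (CMonEq.refl _)
    have h2 : CMonEq (CMonTerm.eta.tensor CMonTerm.eta)
        ((CMonTerm.eta.tensor (CMonTerm.id 0)).comp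
          ((CMonTerm.id 1).tensor CMonTerm.eta)) :=
      (CMonEq.tensor_congr (CMonEq.comp_id CMonTerm.eta).symm
        (CMonEq.id_comp CMonTerm.eta).symm).trans
        (CMonEq.interchange _ _ _ _).symm
    have h3 : CMonEq ((etaN 2).comp CMonTerm.mu)
        (((CMonTerm.eta.tensor (CMonTerm.id 0)).comp
          ((CMonTerm.id 1).tensor CMonTerm.eta)).comp CMonTerm.mu) :=
      h1.trans (CMonEq.comp_congr h2 (CMonEq.refl _))
    have h4 : CMonEq ((etaN 2).comp CMonTerm.mu)
        ((CMonTerm.eta.tensor (CMonTerm.id 0)).comp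
          (((CMonTerm.id 1).tensor CMonTerm.eta).comp CMonTerm.mu)) :=
      h3.trans (CMonEq.comp_assoc _ _ _)
    have h5 : CMonEq ((etaN 2).comp CMonTerm.mu)
        ((CMonTerm.eta.tensor (CMonTerm.id 0)).comp (CMonTerm.id 1)) :=
      h4.trans (CMonEq.comp_congr (CMonEq.refl _) mu_unit')
    exact (((h5.trans (CMonEq.comp_id _)).trans
      (CMonEq.tensor_unit_right _))).trans e1.symm
  | eta =>
    have e1 : CMonEq (etaN 1) CMonTerm.eta := by
      have := CMonEq.tensor_unit_left CMonTerm.eta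
      rwa [castT_triv] at this
    exact (CMonEq.id_comp _).trans e1.symm
end

section
/- Let C be a hypergraph category and let f : A → B be any morphism built by tensor and composition from id, the symmetry σ, the comultiplication δ, and the multiplication μ of the Frobenius structures. Then δ is 'natural' with respect to f: f ; δ_B = δ_A ; (f ⊗ f), and μ is 'natural' with respect to f: (f ⊗ f) ; μ_B = μ_A ; f. -/
open CategoryTheory MonoidalCategory

/-- A hypergraph category structure: a chosen special Frobenius monoid
`(μ X, η X, δ X, ε X)` on every object of a symmetric monoidal category, compatible
with the tensor product and the unit. -/
class HypergraphStructure (C : Type*) [Category C] [MonoidalCategory C]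
    [SymmetricCategory C] where
  mu : ∀ X : C, X ⊗ X ⟶ X
  eta : ∀ X : C, 𝟙_ C ⟶ X
  delta : ∀ X : C, X ⟶ X ⊗ X
  eps : ∀ X : C, X ⟶ 𝟙_ C
  mu_assoc : ∀ X : C, (α_ X X X).hom ≫ (X ◁ mu X) ≫ mu X = (mu X ▷ X) ≫ mu X
  mu_comm : ∀ X : C, (β_ X X).hom ≫ mu X = mu X
  mu_unit : ∀ X : C, (λ_ X).inv ≫ (eta X ▷ X) ≫ mu X = 𝟙 X
  delta_coassoc : ∀ X : C,
    delta X ≫ (X ◁ delta X) = delta X ≫ (delta X ▷ X) ≫ (α_ X X X).hom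
  delta_cocomm : ∀ X : C, delta X ≫ (β_ X X).hom = delta X
  delta_counit : ∀ X : C, delta X ≫ (eps X ▷ X) ≫ (λ_ X).hom = 𝟙 X
  frobenius : ∀ X : C, (delta X ▷ X) ≫ (α_ X X X).hom ≫ (X ◁ mu X) = mu X ≫ delta X
  frobenius' : ∀ X : C, (X ◁ delta X) ≫ (α_ X X X).inv ≫ (mu X ▷ X) = mu X ≫ delta X
  special : ∀ X : C, delta X ≫ mu X = 𝟙 X
  mu_tensor : ∀ X Y : C, mu (X ⊗ Y) = tensorμ X Y X Y ≫ (mu X ⊗ₘ mu Y)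
  eta_tensor : ∀ X Y : C, eta (X ⊗ Y) = (λ_ (𝟙_ C)).inv ≫ (eta X ⊗ₘ eta Y)
  delta_tensor : ∀ X Y : C, delta (X ⊗ Y) = (delta X ⊗ₘ delta Y) ≫ tensorμ X X Y Y
  eps_tensor : ∀ X Y : C, eps (X ⊗ Y) = (eps X ⊗ₘ eps Y) ≫ (λ_ (𝟙_ C)).hom
  mu_unit_obj : mu (𝟙_ C) = (λ_ (𝟙_ C)).hom
  eta_unit_obj : eta (𝟙_ C) = 𝟙 (𝟙_ C)
  delta_unit_obj : delta (𝟙_ C) = (λ_ (𝟙_ C)).inv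
  eps_unit_obj : eps (𝟙_ C) = 𝟙 (𝟙_ C)

namespace HypergraphStructure

variable {C : Type*} [Category C] [MonoidalCategory C] [SymmetricCategory C]
  [HypergraphStructure C]

/-- `cup X = η ; δ : I ⟶ X ⊗ X`. -/
def cup (X : C) : 𝟙_ C ⟶ X ⊗ X := eta X ≫ delta X

/-- `cap X = μ ; ε : X ⊗ X ⟶ I`. -/
def cap (X : C) : X ⊗ X ⟶ 𝟙_ C := mu X ≫ eps X

/-- The dagger induced by the Frobenius structure: bend the input and output wires of
`f` using a cup on the source and a cap on the target. -/
def dagger {A B : C} (f : A ⟶ B) : B ⟶ A :=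
  (λ_ B).inv ≫ (cup A ▷ B) ≫ (α_ A A B).hom ≫ (A ◁ (f ▷ B)) ≫ (A ◁ cap B) ≫ (ρ_ A).hom

end HypergraphStructure

open HypergraphStructure

/-- Morphisms of a hypergraph category built by tensor and composition from identities,
symmetries, the comultiplications `δ` and the multiplications `μ` (together with the
structural isomorphisms, which are identities in the strict setting). -/
inductive SpiderGen {C : Type*} [Category C] [MonoidalCategory C] [SymmetricCategory C]
    [HypergraphStructure C] : ∀ {X Y : C}, (X ⟶ Y) → Prop where
  | id (X : C) : SpiderGen (𝟙 X)
  | braiding (X Y : C) : SpiderGen (β_ X Y).hom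
  | delta (X : C) : SpiderGen (delta X)
  | mu (X : C) : SpiderGen (mu X)
  | assoc (X Y Z : C) : SpiderGen (α_ X Y Z).hom
  | assoc_inv (X Y Z : C) : SpiderGen (α_ X Y Z).inv
  | leftUnitor (X : C) : SpiderGen (λ_ X).hom
  | leftUnitor_inv (X : C) : SpiderGen (λ_ X).inv
  | rightUnitor (X : C) : SpiderGen (ρ_ X).hom
  | rightUnitor_inv (X : C) : SpiderGen (ρ_ X).inv
  | comp {X Y Z : C} {f : X ⟶ Y} {g : Y ⟶ Z} :
      SpiderGen f → SpiderGen g → SpiderGen (f ≫ g)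
  | tensor {X Y Z W : C} {f : X ⟶ Y} {g : Z ⟶ W} :
      SpiderGen f → SpiderGen g → SpiderGen (f ⊗ₘ g)

section Aux

open BraidedCategory

variable {C : Type*} [Category C] [MonoidalCategory C] [SymmetricCategory C]

/-- Braiding commutes with `tensorμ` in a symmetric monoidal category. -/
lemma braiding_tensorμ (W X Y Z : C) :
    (β_ (W ⊗ X) (Y ⊗ Z)).hom ≫ tensorμ Y Z W X =
      tensorμ W X Y Z ≫ ((β_ W Y).hom ⊗ₘ (β_ X Z).hom) := by
  dsimp only [tensorμ]
  simp only [braiding_tensor_left_hom, braiding_tensor_right_hom, comp_whiskerRight,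
    whisker_assoc, MonoidalCategory.whiskerLeft_comp, Category.assoc]
  calc
    _ = 𝟙 _ ⊗≫ W ◁ (β_ X Y).hom ▷ Z ⊗≫ (β_ W Y).hom ▷ (X ⊗ Z) ⊗≫
          (Y ⊗ W) ◁ (β_ X Z).hom ⊗≫
          Y ◁ ((β_ W Z).hom ≫ (β_ Z W).hom) ▷ X ⊗≫ 𝟙 _ := by
      monoidal
    _ = 𝟙 _ ⊗≫ W ◁ (β_ X Y).hom ▷ Z ⊗≫ (β_ W Y).hom ▷ (X ⊗ Z) ⊗≫
          (Y ⊗ W) ◁ (β_ X Z).hom ⊗≫ 𝟙 _ := by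
      rw [SymmetricCategory.symmetry]
      monoidal
    _ = _ := by
      rw [MonoidalCategory.tensorHom_def]
      monoidal

/-- In a symmetric category, `tensorδ` is a `tensorμ` with the middle objects swapped. -/
lemma tensorδ_eq_tensorμ (W X Y Z : C) :
    tensorδ W X Y Z = tensorμ W Y X Z := by
  dsimp only [tensorδ, tensorμ]
  rw [← SymmetricCategory.braiding_swap_eq_inv_braiding]

lemma tensorμ_tensorμ (P Q R S : C) :
    tensorμ P Q R S ≫ tensorμ P R Q S = 𝟙 _ := by
  rw [show tensorμ P Q R S = tensorδ P R Q S from (tensorδ_eq_tensorμ P R Q S).symm]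
  exact tensorδ_tensorμ P R Q S

/-- The companion of `braiding_tensorμ`. -/
lemma tensorHom_braiding_tensorμ (A B D E : C) :
    ((β_ A B).hom ⊗ₘ (β_ D E).hom) ≫ tensorμ B A E D =
      tensorμ A B D E ≫ (β_ (A ⊗ D) (B ⊗ E)).hom := by
  have hββ : ((β_ B A).hom ⊗ₘ (β_ E D).hom) ≫ ((β_ A B).hom ⊗ₘ (β_ D E).hom)
      = 𝟙 _ := by
    rw [tensorHom_comp_tensorHom, SymmetricCategory.symmetry, SymmetricCategory.symmetry,
      id_tensorHom_id]
  have h2 : (β_ (A ⊗ D) (B ⊗ E)).hom =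
      tensorμ A D B E ≫ ((β_ A B).hom ⊗ₘ (β_ D E).hom) ≫ tensorμ B A E D := by
    rw [← cancel_epi (β_ (B ⊗ E) (A ⊗ D)).hom, SymmetricCategory.symmetry,
      ← Category.assoc, braiding_tensorμ, Category.assoc, ← Category.assoc
        ((β_ B A).hom ⊗ₘ (β_ E D).hom), hββ, Category.id_comp, tensorμ_tensorμ]
  rw [h2, ← Category.assoc, tensorμ_tensorμ, Category.id_comp]

set_option linter.unusedSectionVars false in
lemma tensor_comp_right {P Q R S U : C} (a : P ⟶ Q) (b : R ⟶ S) (t : S ⟶ U) :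
    (a ⊗ₘ b ≫ t) = (a ⊗ₘ b) ≫ (Q ◁ t) := by
  rw [MonoidalCategory.tensorHom_def, MonoidalCategory.tensorHom_def, MonoidalCategory.whiskerLeft_comp,
    Category.assoc]

set_option linter.unusedSectionVars false in
lemma tensor_comp_left {P Q R S U : C} (a : P ⟶ Q) (t : Q ⟶ U) (b : R ⟶ S) :
    ((a ≫ t) ⊗ₘ b) = (a ⊗ₘ b) ≫ (t ▷ S) := by
  rw [tensorHom_def', tensorHom_def', comp_whiskerRight, Category.assoc]

set_option linter.unusedSectionVars false in
lemma tensor_comp_right' {P Q R S U : C} (a : P ⟶ Q) (t : R ⟶ S) (b : S ⟶ U) :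
    (a ⊗ₘ t ≫ b) = (P ◁ t) ≫ (a ⊗ₘ b) := by
  rw [tensorHom_def', tensorHom_def', MonoidalCategory.whiskerLeft_comp,
    Category.assoc]

set_option linter.unusedSectionVars false in
lemma tensor_comp_left' {P Q R S U : C} (t : P ⟶ Q) (a : Q ⟶ U) (b : R ⟶ S) :
    ((t ≫ a) ⊗ₘ b) = (t ▷ R) ≫ (a ⊗ₘ b) := by
  rw [MonoidalCategory.tensorHom_def, MonoidalCategory.tensorHom_def, comp_whiskerRight, Category.assoc]

variable [HypergraphStructure C]

/-- `δ³` is invariant under `tensorμ` (swapping the two middle outputs). -/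
lemma delta_delta_tensorμ (X : C) :
    delta X ≫ (delta X ⊗ₘ delta X) ≫ tensorμ X X X X =
      delta X ≫ (delta X ⊗ₘ delta X) := by
  have h1 : delta X ≫ X ◁ delta X ≫ (α_ X X X).inv = delta X ≫ delta X ▷ X := by
    rw [← Category.assoc, HypergraphStructure.delta_coassoc]
    simp [Category.assoc]
  have h2 : delta X ≫ X ◁ delta X ≫ (α_ X X X).inv ≫ (β_ X X).hom ▷ X ≫
      (α_ X X X).hom = delta X ≫ X ◁ delta X := by
    calc delta X ≫ X ◁ delta X ≫ (α_ X X X).inv ≫ (β_ X X).hom ▷ X ≫ (α_ X X X).hom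
        = (delta X ≫ X ◁ delta X ≫ (α_ X X X).inv) ≫ (β_ X X).hom ▷ X ≫
            (α_ X X X).hom := by simp only [Category.assoc]
      _ = (delta X ≫ delta X ▷ X) ≫ (β_ X X).hom ▷ X ≫ (α_ X X X).hom := by rw [h1]
      _ = delta X ≫ (delta X ≫ (β_ X X).hom) ▷ X ≫ (α_ X X X).hom := by
          simp only [Category.assoc, comp_whiskerRight]
      _ = delta X ≫ delta X ▷ X ≫ (α_ X X X).hom := by rw [HypergraphStructure.delta_cocomm]
      _ = delta X ≫ X ◁ delta X := (HypergraphStructure.delta_coassoc X).symm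
  dsimp only [tensorμ]
  rw [MonoidalCategory.tensorHom_def (delta X) (delta X)]
  simp only [Category.assoc]
  slice_lhs 3 4 => rw [associator_naturality_right]
  slice_lhs 1 3 => rw [← HypergraphStructure.delta_coassoc]
  slice_lhs 2 6 => simp only [← MonoidalCategory.whiskerLeft_comp]
  rw [h2, MonoidalCategory.whiskerLeft_comp]
  simp only [Category.assoc]
  slice_lhs 3 4 => rw [associator_inv_naturality_right]
  slice_lhs 1 3 => rw [h1]
  simp only [Category.assoc]

/-- `μ³` is invariant under precomposition with `tensorμ`. -/
lemma tensorμ_mu_mu (X : C) :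
    tensorμ X X X X ≫ ((mu X ⊗ₘ mu X) ≫ mu X) = (mu X ⊗ₘ mu X) ≫ mu X := by
  have h1 : (α_ X X X).inv ≫ mu X ▷ X ≫ mu X = X ◁ mu X ≫ mu X := by
    rw [← HypergraphStructure.mu_assoc]
    simp [Category.assoc]
  have key : X ◁ (α_ X X X).hom ≫ (α_ X X (X ⊗ X)).inv ≫ (mu X ⊗ₘ mu X) ≫ mu X =
      X ◁ (mu X ▷ X ≫ mu X) ≫ mu X := by
    rw [tensorHom_def' (mu X) (mu X)]
    simp only [Category.assoc]
    slice_lhs 2 3 => rw [← associator_inv_naturality_right]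
    simp only [Category.assoc]
    rw [h1]
    rw [show X ◁ (α_ X X X).hom ≫ X ◁ (X ◁ mu X) ≫ X ◁ mu X ≫ mu X =
        X ◁ ((α_ X X X).hom ≫ X ◁ mu X ≫ mu X) ≫ mu X from by
      simp only [MonoidalCategory.whiskerLeft_comp, Category.assoc]]
    rw [HypergraphStructure.mu_assoc]
  have key2 : X ◁ ((β_ X X).hom ▷ X) ≫ X ◁ (α_ X X X).hom ≫
      (α_ X X (X ⊗ X)).inv ≫ (mu X ⊗ₘ mu X) ≫ mu X =
      X ◁ (α_ X X X).hom ≫ (α_ X X (X ⊗ X)).inv ≫ (mu X ⊗ₘ mu X) ≫ mu X := by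
    rw [key]
    rw [← MonoidalCategory.whiskerLeft_comp_assoc]
    rw [← comp_whiskerRight_assoc]
    rw [HypergraphStructure.mu_comm, ← key]
  dsimp only [tensorμ]
  simp only [Category.assoc]
  rw [key2]
  calc (α_ X X (X ⊗ X)).hom ≫ X ◁ (α_ X X X).inv ≫ X ◁ (α_ X X X).hom ≫
        (α_ X X (X ⊗ X)).inv ≫ (mu X ⊗ₘ mu X) ≫ mu X
      = 𝟙 _ ≫ (mu X ⊗ₘ mu X) ≫ mu X := by
        rw [← Category.assoc, ← Category.assoc, ← Category.assoc]
        congr 2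
        simp only [Category.assoc, ← MonoidalCategory.whiskerLeft_comp,
          Iso.inv_hom_id, MonoidalCategory.whiskerLeft_id, Category.comp_id,
          Iso.hom_inv_id]
    _ = (mu X ⊗ₘ mu X) ≫ mu X := by rw [Category.id_comp]

lemma frobenius_inner (X : C) :
    (X ◁ delta X) ≫ (α_ X X X).inv ≫ ((β_ X X).hom ▷ X) ≫ (α_ X X X).hom ≫
        (X ◁ mu X) = (β_ X X).hom ≫ mu X ≫ delta X := by
  rw [← HypergraphStructure.frobenius]
  slice_rhs 1 2 => rw [← BraidedCategory.braiding_naturality_right]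
  rw [braiding_tensor_right_hom]
  simp only [Category.assoc, Iso.inv_hom_id_assoc, Iso.inv_hom_id,
    Category.comp_id]
  simp only [← MonoidalCategory.whiskerLeft_comp]
  rw [HypergraphStructure.mu_comm]

/-- The bialgebra-style law for a HypergraphStructure.special commutative Frobenius monoid. -/
lemma bialgebra_law (X : C) :
    (delta X ⊗ₘ delta X) ≫ tensorμ X X X X ≫ (mu X ⊗ₘ mu X) = mu X ≫ delta X := by
  dsimp only [tensorμ]
  rw [MonoidalCategory.tensorHom_def (delta X) (delta X), tensorHom_def' (mu X) (mu X)]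
  simp only [Category.assoc]
  slice_lhs 2 3 => rw [associator_naturality_right]
  slice_lhs 7 8 => rw [← associator_inv_naturality_right]
  slice_lhs 3 7 => simp only [← MonoidalCategory.whiskerLeft_comp]
  rw [frobenius_inner]
  rw [show (β_ X X).hom ≫ mu X ≫ delta X = mu X ≫ delta X from by
    rw [← Category.assoc, HypergraphStructure.mu_comm]]
  rw [MonoidalCategory.whiskerLeft_comp]
  simp only [Category.assoc]
  slice_lhs 4 6 => rw [HypergraphStructure.frobenius']
  slice_lhs 1 3 => rw [HypergraphStructure.frobenius]
  slice_lhs 2 3 => rw [HypergraphStructure.special]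
  simp

lemma delta_nat_braiding (X Y : C) :
    (β_ X Y).hom ≫ delta (Y ⊗ X) = delta (X ⊗ Y) ≫ ((β_ X Y).hom ⊗ₘ (β_ X Y).hom) := by
  rw [HypergraphStructure.delta_tensor, HypergraphStructure.delta_tensor]
  simp only [Category.assoc]
  rw [← braiding_tensorμ, ← BraidedCategory.braiding_naturality_assoc]

lemma mu_nat_braiding (X Y : C) :
    ((β_ X Y).hom ⊗ₘ (β_ X Y).hom) ≫ mu (Y ⊗ X) = mu (X ⊗ Y) ≫ (β_ X Y).hom := by
  rw [HypergraphStructure.mu_tensor, HypergraphStructure.mu_tensor]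
  rw [← Category.assoc, tensorHom_braiding_tensorμ]
  simp only [Category.assoc]
  rw [← BraidedCategory.braiding_naturality]

lemma delta_nat_assoc (X Y Z : C) :
    (α_ X Y Z).hom ≫ delta (X ⊗ (Y ⊗ Z)) =
      delta ((X ⊗ Y) ⊗ Z) ≫ ((α_ X Y Z).hom ⊗ₘ (α_ X Y Z).hom) := by
  rw [HypergraphStructure.delta_tensor, HypergraphStructure.delta_tensor, HypergraphStructure.delta_tensor, HypergraphStructure.delta_tensor,
    tensor_comp_right, tensor_comp_left]
  simp only [Category.assoc]
  rw [tensor_associativity, associator_naturality_assoc]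

lemma mu_nat_assoc (X Y Z : C) :
    ((α_ X Y Z).hom ⊗ₘ (α_ X Y Z).hom) ≫ mu (X ⊗ (Y ⊗ Z)) =
      mu ((X ⊗ Y) ⊗ Z) ≫ (α_ X Y Z).hom := by
  rw [HypergraphStructure.mu_tensor, HypergraphStructure.mu_tensor, HypergraphStructure.mu_tensor, HypergraphStructure.mu_tensor,
    tensor_comp_right', tensor_comp_left']
  simp only [Category.assoc]
  rw [associator_naturality (mu X) (mu Y) (mu Z)]
  rw [associator_monoidal_assoc]

lemma delta_nat_leftUnitor (X : C) :
    (λ_ X).hom ≫ delta X = delta (𝟙_ C ⊗ X) ≫ ((λ_ X).hom ⊗ₘ (λ_ X).hom) := by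
  rw [HypergraphStructure.delta_tensor, HypergraphStructure.delta_unit_obj, tensorHom_def' (λ_ (𝟙_ C)).inv (delta X)]
  simp only [Category.assoc]
  rw [← tensor_left_unitality, leftUnitor_naturality]

lemma mu_nat_leftUnitor (X : C) :
    ((λ_ X).hom ⊗ₘ (λ_ X).hom) ≫ mu X = mu (𝟙_ C ⊗ X) ≫ (λ_ X).hom := by
  rw [HypergraphStructure.mu_tensor, HypergraphStructure.mu_unit_obj, leftUnitor_monoidal X X,
    MonoidalCategory.tensorHom_def (λ_ (𝟙_ C)).hom (mu X)]
  simp only [Category.assoc]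
  rw [← leftUnitor_naturality]

lemma delta_nat_rightUnitor (X : C) :
    (ρ_ X).hom ≫ delta X = delta (X ⊗ 𝟙_ C) ≫ ((ρ_ X).hom ⊗ₘ (ρ_ X).hom) := by
  rw [HypergraphStructure.delta_tensor, HypergraphStructure.delta_unit_obj, MonoidalCategory.tensorHom_def (delta X) (λ_ (𝟙_ C)).inv]
  simp only [Category.assoc]
  rw [← tensor_right_unitality, rightUnitor_naturality]

lemma mu_nat_rightUnitor (X : C) :
    ((ρ_ X).hom ⊗ₘ (ρ_ X).hom) ≫ mu X = mu (X ⊗ 𝟙_ C) ≫ (ρ_ X).hom := by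
  rw [HypergraphStructure.mu_tensor, HypergraphStructure.mu_unit_obj, rightUnitor_monoidal X X,
    tensorHom_def' (mu X) (λ_ (𝟙_ C)).hom]
  simp only [Category.assoc]
  rw [← rightUnitor_naturality]

/-- Transfer of `δ`-naturality along inverses of isomorphisms. -/
lemma iso_delta_nat {A B : C} (e : A ≅ B)
    (h : e.hom ≫ delta B = delta A ≫ (e.hom ⊗ₘ e.hom)) :
    e.inv ≫ delta A = delta B ≫ (e.inv ⊗ₘ e.inv) := by
  have h2 : e.inv ≫ (e.hom ≫ delta B) ≫ (e.inv ⊗ₘ e.inv) = delta B ≫ (e.inv ⊗ₘ e.inv) := by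
    simp
  rw [h] at h2
  rw [← h2]
  simp [tensorHom_comp_tensorHom]

/-- Transfer of `μ`-naturality along inverses of isomorphisms. -/
lemma iso_mu_nat {A B : C} (e : A ≅ B)
    (h : (e.hom ⊗ₘ e.hom) ≫ mu B = mu A ≫ e.hom) :
    (e.inv ⊗ₘ e.inv) ≫ mu A = mu B ≫ e.inv := by
  have h2 : (e.inv ⊗ₘ e.inv) ≫ ((e.hom ⊗ₘ e.hom) ≫ mu B) ≫ e.inv = mu B ≫ e.inv := by
    rw [← Category.assoc, ← Category.assoc, tensorHom_comp_tensorHom]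
    simp
  rw [h] at h2
  rw [← h2]
  simp

end Aux

/-- `δ` and `μ` are natural with respect to every morphism `f` built from
`id`, `σ`, `δ` and `μ`:  `f ; δ = δ ; (f ⊗ₘ f)` and `(f ⊗ₘ f) ; μ = μ ; f`. -/
theorem spider_partial_naturality {C : Type*} [Category C] [MonoidalCategory C]
    [SymmetricCategory C] [HypergraphStructure C] {A B : C} (f : A ⟶ B)
    (hf : SpiderGen f) :
    f ≫ delta B = delta A ≫ (f ⊗ₘ f) ∧ (f ⊗ₘ f) ≫ mu B = mu A ≫ f := by
  induction hf with
  | id X => simp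
  | braiding X Y => exact ⟨delta_nat_braiding X Y, mu_nat_braiding X Y⟩
  | delta X =>
      constructor
      · rw [HypergraphStructure.delta_tensor]
        exact delta_delta_tensorμ X
      · rw [HypergraphStructure.mu_tensor]
        exact bialgebra_law X
  | mu X =>
      constructor
      · rw [HypergraphStructure.delta_tensor, Category.assoc]
        exact (bialgebra_law X).symm
      · rw [HypergraphStructure.mu_tensor, Category.assoc]
        exact (tensorμ_mu_mu X).symm
  | assoc X Y Z => exact ⟨delta_nat_assoc X Y Z, mu_nat_assoc X Y Z⟩
  | assoc_inv X Y Z =>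
      exact ⟨iso_delta_nat (α_ X Y Z) (delta_nat_assoc X Y Z),
        iso_mu_nat (α_ X Y Z) (mu_nat_assoc X Y Z)⟩
  | leftUnitor X => exact ⟨delta_nat_leftUnitor X, mu_nat_leftUnitor X⟩
  | leftUnitor_inv X =>
      exact ⟨iso_delta_nat (λ_ X) (delta_nat_leftUnitor X),
        iso_mu_nat (λ_ X) (mu_nat_leftUnitor X)⟩
  | rightUnitor X => exact ⟨delta_nat_rightUnitor X, mu_nat_rightUnitor X⟩
  | rightUnitor_inv X =>
      exact ⟨iso_delta_nat (ρ_ X) (delta_nat_rightUnitor X),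
        iso_mu_nat (ρ_ X) (mu_nat_rightUnitor X)⟩
  | comp hf hg ihf ihg =>
      obtain ⟨hfd, hfm⟩ := ihf
      obtain ⟨hgd, hgm⟩ := ihg
      constructor
      · rw [Category.assoc, hgd, ← Category.assoc, hfd, Category.assoc, tensorHom_comp_tensorHom]
      · rw [← tensorHom_comp_tensorHom, Category.assoc, hgm, ← Category.assoc, hfm, Category.assoc]
  | tensor hf hg ihf ihg =>
      obtain ⟨hfd, hfm⟩ := ihf
      obtain ⟨hgd, hgm⟩ := ihg
      constructor
      · rw [HypergraphStructure.delta_tensor, HypergraphStructure.delta_tensor]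
        rw [← Category.assoc, tensorHom_comp_tensorHom, hfd, hgd, ← tensorHom_comp_tensorHom]
        simp only [Category.assoc]
        rw [tensorμ_natural]
      · rw [HypergraphStructure.mu_tensor, HypergraphStructure.mu_tensor]
        rw [← Category.assoc, tensorμ_natural]
        simp only [Category.assoc]
        rw [tensorHom_comp_tensorHom, hfm, hgm, ← tensorHom_comp_tensorHom]
end
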